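/- Let X : ℕ → ℝ be a stochastic process adapted to a filtration on a probability space, with 0 ≤ X t ≤ B almost surely, E[X (t+1) − X t | F t] ≥ 0 (sub-martingale), and Var[X (t+1) | F t] ≥ V > 0 on the event {0 < X t < B}. Let T = inf {t | X t = 0 ∨ X t = B} (interpreted via the stopped process). Then E[T] ≤ B² / V. -/

import Mathlib

open MeasureTheory

lemma tele_aux {C : ℝ} {a : ℕ → ℝ} {p : ℕ → Prop} [DecidablePred p]
    (hp : ∀ n, p (n + 1) → p n) (h0 : 0 ≤ a 0) (hC : ∀ n, a n ≤ C) (N : ℕ) :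
    ∑ n ∈ Finset.range N, (if p n then a (n + 1) - a n else 0) ≤ C := by
  have hmono : ∀ n, p n → ∀ m, m ≤ n → p m := by
    intro n
    induction n with
    | zero => intro hn m hm; exact (Nat.le_zero.mp hm) ▸ hn
    | succ k ih =>
      intro hn m hm
      rcases Nat.lt_succ_iff_lt_or_eq.mp (Nat.lt_succ_of_le hm) with h | h
      · exact ih (hp k hn) m (Nat.lt_succ_iff.mp h)
      · exact h ▸ hn
  have key : ∀ M, ((∀ n, n < M → p n) →
        (∑ n ∈ Finset.range M, (if p n then a (n + 1) - a n else 0)) = a M - a 0) ∧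
      ∃ k, (∑ n ∈ Finset.range M, (if p n then a (n + 1) - a n else 0)) = a k - a 0 := by
    intro M
    induction M with
    | zero => exact ⟨fun _ => by simp, ⟨0, by simp⟩⟩
    | succ M ih =>
      by_cases hpM : p M
      · have hSM : (∑ n ∈ Finset.range M, (if p n then a (n + 1) - a n else 0)) = a M - a 0 :=
          ih.1 (fun n hn => hmono M hpM n (Nat.lt_succ_iff.mp (Nat.lt_succ_of_lt hn)))
        constructor
        · intro _
          rw [Finset.sum_range_succ, hSM, if_pos hpM]; ring
        · exact ⟨M + 1, by rw [Finset.sum_range_succ, hSM, if_pos hpM]; ring⟩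
      · obtain ⟨k, hk⟩ := ih.2
        constructor
        · intro h; exact absurd (h M (Nat.lt_succ_self M)) hpM
        · exact ⟨k, by rw [Finset.sum_range_succ, hk, if_neg hpM]; ring⟩
  obtain ⟨k, hk⟩ := (key N).2
  rw [hk]
  linarith [hC k]

lemma tsum_lt_nat (k : ℕ) :
    ∑' n : ℕ, (if n < k then (1 : ENNReal) else 0) = k := by
  rw [tsum_eq_sum (s := Finset.range k) (fun n hn => if_neg (fun h => hn (Finset.mem_range.mpr h)))]
  rw [Finset.sum_congr rfl (fun n hn => if_pos (Finset.mem_range.mp hn))]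
  simp

theorem stmt_13 {Ω : Type*} {m0 : MeasurableSpace Ω}
    (μ : Measure Ω) [IsProbabilityMeasure μ]
    (ℱ : Filtration ℕ m0) (X : ℕ → Ω → ℝ)
    (hadapted : Adapted ℱ X)
    (hint : ∀ t, Integrable (X t) μ)
    (B V : ℝ) (hB : 0 < B) (hV : 0 < V)
    (hbound : ∀ t, ∀ᵐ ω ∂μ, 0 ≤ X t ω ∧ X t ω ≤ B)
    (hsubmart : ∀ t, 0 ≤ᵐ[μ] μ[X (t + 1) - X t | ℱ t])
    (hvar : ∀ t, ∀ᵐ ω ∂μ, (0 < X t ω ∧ X t ω < B) →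
      V ≤ (μ[fun ω' => (X (t + 1) ω' - (μ[X (t + 1) | ℱ t]) ω') ^ 2 | ℱ t]) ω)
    (T : Ω → ℕ)
    (hT : ∀ ω, T ω = sInf {t | X t ω = 0 ∨ X t ω = B}) :
    ∫ ω, (T ω : ℝ) ∂μ ≤ B ^ 2 / V := by
  classical
  -- basic measurability
  have hXm : ∀ t, Measurable (X t) := fun t => ((hadapted t).mono (ℱ.le t) le_rfl)
  set E : ℕ → Set Ω := fun n => {ω | ∀ s ≤ n, X s ω ≠ 0 ∧ X s ω ≠ B} with hE
  have hEF : ∀ n, MeasurableSet[ℱ n] (E n) := by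
    intro n
    have hrw : E n = ⋂ (s : ℕ) (_ : s ≤ n), ({ω | X s ω ≠ 0} ∩ {ω | X s ω ≠ B}) := by
      ext ω; simp [hE]
    rw [hrw]
    refine MeasurableSet.iInter fun s => MeasurableSet.iInter fun hs => ?_
    have hm : Measurable[ℱ n] (X s) := ((hadapted s).mono (ℱ.mono hs) le_rfl)
    exact ((hm (measurableSet_singleton 0)).compl).inter ((hm (measurableSet_singleton B)).compl)
  have hEm0 : ∀ n, MeasurableSet (E n) := fun n => ℱ.le n _ (hEF n)
  have hEanti : ∀ n, E (n + 1) ⊆ E n := fun n ω hω s hs => hω s (hs.trans (Nat.le_succ n))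
  have hball : ∀ᵐ ω ∂μ, ∀ t, 0 ≤ X t ω ∧ X t ω ≤ B := (ae_all_iff).2 hbound
  -- integrability of squares
  have hXsq_int : ∀ t, Integrable (fun ω => X t ω ^ 2) μ := by
    intro t
    refine Integrable.mono' (integrable_const (B ^ 2)) ((hXm t).pow_const 2).aestronglyMeasurable ?_
    filter_upwards [hball] with ω h
    have := h t
    rw [Real.norm_eq_abs, abs_of_nonneg (by positivity)]
    nlinarith [this.1, this.2]
  -- conditional expectation facts
  have hm_bdd : ∀ n, ∀ᵐ ω ∂μ, 0 ≤ (μ[X (n + 1) | ℱ n]) ω ∧ (μ[X (n + 1) | ℱ n]) ω ≤ B := by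
    intro n
    have h1 : 0 ≤ᵐ[μ] μ[X (n + 1) | ℱ n] :=
      condExp_nonneg ((hbound (n + 1)).mono fun ω h => h.1)
    have h2 : μ[X (n + 1) | ℱ n] ≤ᵐ[μ] μ[(fun _ => B) | ℱ n] :=
      condExp_mono (hint (n + 1)) (integrable_const B) ((hbound (n + 1)).mono fun ω h => h.2)
    have h3 : μ[(fun _ => B) | ℱ n] = fun _ => B := condExp_const (ℱ.le n) B
    filter_upwards [h1, h2] with ω h1 h2
    exact ⟨h1, by simpa [h3] using h2⟩
  have hm_ge : ∀ n, X n ≤ᵐ[μ] μ[X (n + 1) | ℱ n] := by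
    intro n
    have h2 : μ[X (n + 1) - X n | ℱ n] =ᵐ[μ] μ[X (n + 1) | ℱ n] - μ[X n | ℱ n] :=
      condExp_sub (hint (n + 1)) (hint n) _
    have h3 : μ[X n | ℱ n] = X n := condExp_of_stronglyMeasurable (ℱ.le n) (hadapted n).stronglyMeasurable (hint n)
    filter_upwards [hsubmart n, h2] with ω ha hb
    have : (0 : ℝ) ≤ (μ[X (n + 1) | ℱ n] - μ[X n | ℱ n]) ω := hb ▸ ha
    rw [h3] at this
    simpa using this
  have hEdef : ∀ n, E n = {ω | ∀ s ≤ n, X s ω ≠ 0 ∧ X s ω ≠ B} := fun n => rfl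
  have step : ∀ n, V * (μ (E n)).toReal ≤ ∫ ω in E n, (X (n + 1) ω ^ 2 - X n ω ^ 2) ∂μ := by
    intro n
    set M : Ω → ℝ := μ[X (n + 1) | ℱ n] with hM
    have hMsm : StronglyMeasurable[ℱ n] M := stronglyMeasurable_condExp
    have hMm : Measurable M := (hMsm.mono (ℱ.le n)).measurable
    set D : Ω → ℝ := fun ω => (X (n + 1) ω - M ω) ^ 2 with hD
    have hDint : Integrable D μ := by
      refine Integrable.mono' (integrable_const (B ^ 2))
        (((hXm (n + 1)).sub hMm).pow_const 2).aestronglyMeasurable ?_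
      filter_upwards [hball, hm_bdd n] with ω h hm
      have h1 := h (n + 1)
      show ‖(X (n + 1) ω - M ω) ^ 2‖ ≤ B ^ 2
      rw [Real.norm_eq_abs, abs_of_nonneg (by positivity)]
      nlinarith [h1.1, h1.2, hm.1, hm.2, mul_nonneg h1.1 hm.1,
        mul_le_mul_of_nonneg_left h1.2 h1.1, mul_le_mul_of_nonneg_left hm.2 hm.1,
        mul_le_mul_of_nonneg_right h1.2 hB.le, mul_le_mul_of_nonneg_right hm.2 hB.le]
    have hMX_int : Integrable (M * X (n + 1)) μ := by
      refine Integrable.mono' (integrable_const (B * B))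
        ((hMm.mul (hXm (n + 1))).aestronglyMeasurable) ?_
      filter_upwards [hball, hm_bdd n] with ω h hm
      have h1 := h (n + 1)
      rw [Pi.mul_apply, Real.norm_eq_abs, abs_of_nonneg (mul_nonneg hm.1 h1.1)]
      nlinarith [h1.1, h1.2, hm.1, hm.2]
    have hMsq_int : Integrable (fun ω => M ω ^ 2) μ := by
      refine Integrable.mono' (integrable_const (B ^ 2))
        ((hMm.pow_const 2).aestronglyMeasurable) ?_
      filter_upwards [hm_bdd n] with ω hm
      rw [Real.norm_eq_abs, abs_of_nonneg (by positivity)]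
      nlinarith [hm.1, hm.2]
    -- (a) V * μ(E n) ≤ ∫_{E n} condexp D
    have ha : V * (μ (E n)).toReal ≤ ∫ ω in E n, (μ[D | ℱ n]) ω ∂μ := by
      have hVle : ∀ᵐ ω ∂μ, ω ∈ E n → V ≤ (μ[D | ℱ n]) ω := by
        filter_upwards [hvar n, hball] with ω hv hb hmem
        rw [hEdef n] at hmem
        have h1 := hmem n le_rfl
        have h2 := hb n
        exact hv ⟨lt_of_le_of_ne h2.1 (Ne.symm h1.1), lt_of_le_of_ne h2.2 h1.2⟩
      have : ∫ ω in E n, (fun _ => V) ω ∂μ ≤ ∫ ω in E n, (μ[D | ℱ n]) ω ∂μ := by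
        refine setIntegral_mono_ae_restrict ((integrableOn_const_iff (C := V)).mpr (Or.inr ?_))
          integrable_condExp.integrableOn ?_
        · exact (measure_lt_top μ _)
        · rw [Filter.EventuallyLE]
          exact (ae_restrict_iff' (hEm0 n)).2 hVle
      simpa [measureReal_def, Measure.restrict_apply_univ, smul_eq_mul, mul_comm] using this
    -- (b) ∫_{E n} condexp D = ∫_{E n} D
    have hb2 : ∫ ω in E n, (μ[D | ℱ n]) ω ∂μ = ∫ ω in E n, D ω ∂μ :=
      setIntegral_condExp (ℱ.le n) hDint (hEF n)
    -- pull-out: ∫_{E n} M * X(n+1) = ∫_{E n} M^2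
    have hpull : ∫ ω in E n, M ω * X (n + 1) ω ∂μ = ∫ ω in E n, M ω ^ 2 ∂μ := by
      have h1 : μ[M * X (n + 1) | ℱ n] =ᵐ[μ] M * μ[X (n + 1) | ℱ n] :=
        condExp_mul_of_stronglyMeasurable_left hMsm hMX_int (hint (n + 1))
      have h2 : ∫ ω in E n, (μ[M * X (n + 1) | ℱ n]) ω ∂μ = ∫ ω in E n, (M * X (n + 1)) ω ∂μ :=
        setIntegral_condExp (ℱ.le n) hMX_int (hEF n)
      have h3 : ∫ ω in E n, (μ[M * X (n + 1) | ℱ n]) ω ∂μ = ∫ ω in E n, M ω ^ 2 ∂μ := by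
        refine setIntegral_congr_ae (hEm0 n) ?_
        filter_upwards [h1] with ω hω _
        rw [hω, Pi.mul_apply, ← hM, sq]
      rw [← h3, h2]; rfl
    -- (c) ∫_{E n} D = ∫_{E n} X(n+1)^2 - ∫_{E n} M^2
    have hc : ∫ ω in E n, D ω ∂μ =
        (∫ ω in E n, X (n + 1) ω ^ 2 ∂μ) - ∫ ω in E n, M ω ^ 2 ∂μ := by
      have hexp : ∀ ω, D ω = X (n + 1) ω ^ 2 - 2 * (M ω * X (n + 1) ω) + M ω ^ 2 := by
        intro ω; rw [hD]; ring
      calc ∫ ω in E n, D ω ∂μ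
          = ∫ ω in E n, (X (n + 1) ω ^ 2 - 2 * (M ω * X (n + 1) ω) + M ω ^ 2) ∂μ := by
            simp_rw [hexp]
        _ = (∫ ω in E n, X (n + 1) ω ^ 2 ∂μ) - 2 * (∫ ω in E n, M ω * X (n + 1) ω ∂μ)
              + ∫ ω in E n, M ω ^ 2 ∂μ := by
            have i0 : Integrable (fun ω => M ω * X (n + 1) ω) μ := hMX_int
            have i1 : IntegrableOn (fun ω => X (n + 1) ω ^ 2 - 2 * (M ω * X (n + 1) ω)) (E n) μ :=
              ((hXsq_int (n + 1)).sub (i0.const_mul 2)).integrableOn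
            have A : ∫ ω in E n, (X (n + 1) ω ^ 2 - 2 * (M ω * X (n + 1) ω) + M ω ^ 2) ∂μ =
                (∫ ω in E n, (X (n + 1) ω ^ 2 - 2 * (M ω * X (n + 1) ω)) ∂μ)
                  + ∫ ω in E n, M ω ^ 2 ∂μ :=
              integral_add i1 hMsq_int.integrableOn
            have Bq : ∫ ω in E n, (X (n + 1) ω ^ 2 - 2 * (M ω * X (n + 1) ω)) ∂μ =
                (∫ ω in E n, X (n + 1) ω ^ 2 ∂μ)
                  - ∫ ω in E n, 2 * (M ω * X (n + 1) ω) ∂μ :=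
              integral_sub (hXsq_int (n + 1)).integrableOn (i0.const_mul 2).integrableOn
            have Cq : ∫ ω in E n, 2 * (M ω * X (n + 1) ω) ∂μ =
                2 * ∫ ω in E n, M ω * X (n + 1) ω ∂μ := integral_const_mul 2 _
            rw [A, Bq, Cq]
        _ = (∫ ω in E n, X (n + 1) ω ^ 2 ∂μ) - ∫ ω in E n, M ω ^ 2 ∂μ := by
            rw [hpull]; ring
    -- (d) ∫_{E n} X n ^ 2 ≤ ∫_{E n} M ^ 2
    have hd : ∫ ω in E n, X n ω ^ 2 ∂μ ≤ ∫ ω in E n, M ω ^ 2 ∂μ := by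
      refine setIntegral_mono_ae_restrict (hXsq_int n).integrableOn hMsq_int.integrableOn ?_
      refine ae_restrict_of_ae ?_
      filter_upwards [hball, hm_ge n] with ω hb hg
      have := (hb n).1
      nlinarith [hg]
    have hfinal : ∫ ω in E n, (X (n + 1) ω ^ 2 - X n ω ^ 2) ∂μ =
        (∫ ω in E n, X (n + 1) ω ^ 2 ∂μ) - ∫ ω in E n, X n ω ^ 2 ∂μ :=
      integral_sub (hXsq_int (n + 1)).integrableOn (hXsq_int n).integrableOn
    rw [hfinal]
    have := ha.trans_eq (hb2.trans hc)
    linarith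
  have gInt : ∀ n, Integrable (Set.indicator (E n) (fun ω => X (n + 1) ω ^ 2 - X n ω ^ 2)) μ :=
    fun n => (((hXsq_int (n + 1)).sub (hXsq_int n)).integrableOn).integrable_indicator (hEm0 n)
  have sum_step : ∀ N, V * ∑ n ∈ Finset.range N, (μ (E n)).toReal ≤ B ^ 2 := by
    intro N
    have h1 : V * ∑ n ∈ Finset.range N, (μ (E n)).toReal ≤
        ∑ n ∈ Finset.range N, ∫ ω in E n, (X (n + 1) ω ^ 2 - X n ω ^ 2) ∂μ := by
      rw [Finset.mul_sum]
      exact Finset.sum_le_sum fun n _ => step n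
    have h2 : ∑ n ∈ Finset.range N, ∫ ω in E n, (X (n + 1) ω ^ 2 - X n ω ^ 2) ∂μ =
        ∫ ω, (∑ n ∈ Finset.range N,
          Set.indicator (E n) (fun ω => X (n + 1) ω ^ 2 - X n ω ^ 2) ω) ∂μ := by
      rw [integral_finset_sum _ (fun n _ => gInt n)]
      exact Finset.sum_congr rfl fun n _ => (integral_indicator (hEm0 n)).symm
    have h3 : ∫ ω, (∑ n ∈ Finset.range N,
        Set.indicator (E n) (fun ω => X (n + 1) ω ^ 2 - X n ω ^ 2) ω) ∂μ ≤ B ^ 2 := by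
      have hb : ∀ᵐ ω ∂μ, (∑ n ∈ Finset.range N,
          Set.indicator (E n) (fun ω => X (n + 1) ω ^ 2 - X n ω ^ 2) ω) ≤ B ^ 2 := by
        filter_upwards [hball] with ω h
        have := tele_aux (C := B ^ 2) (a := fun k => X k ω ^ 2) (p := fun n => ω ∈ E n)
          (fun n hn => hEanti n hn) (sq_nonneg _)
          (fun k => pow_le_pow_left₀ (h k).1 (h k).2 2) N
        simpa [Set.indicator_apply] using this
      have := integral_mono_ae (integrable_finset_sum _ (fun n _ => gInt n))
        (integrable_const (B ^ 2)) hb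
      simpa using this
    linarith
  have real_bound : ∀ N, ∑ n ∈ Finset.range N, (μ (E n)).toReal ≤ B ^ 2 / V := by
    intro N
    rw [le_div_iff₀ hV]
    calc (∑ n ∈ Finset.range N, (μ (E n)).toReal) * V
        = V * ∑ n ∈ Finset.range N, (μ (E n)).toReal := by ring
      _ ≤ B ^ 2 := sum_step N
  -- relate T to E
  have hTsub : ∀ n, {ω | n < T ω} ⊆ E n := by
    intro n ω hω s hs
    have key : ¬ (X s ω = 0 ∨ X s ω = B) := by
      intro hmem
      have h1 : T ω ≤ s := by rw [hT ω]; exact Nat.sInf_le hmem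
      exact absurd hω (by simp only [Set.mem_setOf_eq] at *; omega)
    exact ⟨fun h => key (Or.inl h), fun h => key (Or.inr h)⟩
  have hGt : ∀ n, MeasurableSet {ω | n < T ω} := by
    intro n
    have hrw : {ω | n < T ω} = (⋃ t, ({ω | X t ω = 0} ∪ {ω | X t ω = B})) ∩ E n := by
      ext ω
      simp only [Set.mem_setOf_eq, Set.mem_inter_iff, Set.mem_iUnion, Set.mem_union]
      constructor
      · intro hlt
        have hne : {t | X t ω = 0 ∨ X t ω = B}.Nonempty := by
          by_contra hemp
          rw [Set.not_nonempty_iff_eq_empty] at hemp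
          rw [hT ω, hemp, Nat.sInf_empty] at hlt; omega
        obtain ⟨t, ht⟩ := hne
        refine ⟨⟨t, ht⟩, fun s hs => ?_⟩
        have key : ¬ (X s ω = 0 ∨ X s ω = B) := fun hmem => by
          have h1 : T ω ≤ s := by rw [hT ω]; exact Nat.sInf_le hmem
          omega
        exact ⟨fun h => key (Or.inl h), fun h => key (Or.inr h)⟩
      · rintro ⟨⟨t, ht⟩, hEn⟩
        have hne : {t | X t ω = 0 ∨ X t ω = B}.Nonempty := ⟨t, ht⟩
        have hmem : T ω ∈ {t | X t ω = 0 ∨ X t ω = B} := hT ω ▸ Nat.sInf_mem hne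
        by_contra hcon
        push_neg at hcon
        have hEn' : ∀ s ≤ n, X s ω ≠ 0 ∧ X s ω ≠ B := hEn
        have h2 := hEn' (T ω) hcon
        rcases hmem with h | h
        · exact h2.1 h
        · exact h2.2 h
    rw [hrw]
    exact (MeasurableSet.iUnion fun t => ((hXm t (measurableSet_singleton 0)).union
      (hXm t (measurableSet_singleton B)))).inter (hEm0 n)
  have hTm : Measurable T := by
    refine measurable_to_countable' fun k => ?_
    match k with
    | 0 =>
      have h0 : T ⁻¹' {0} = {ω | 0 < T ω}ᶜ := by
        ext ω; simp [Nat.pos_iff_ne_zero]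
      rw [h0]; exact (hGt 0).compl
    | (j+1) =>
      have h0 : T ⁻¹' {j+1} = {ω | j < T ω} ∩ {ω | j+1 < T ω}ᶜ := by
        ext ω
        simp only [Set.mem_preimage, Set.mem_singleton_iff, Set.mem_inter_iff,
          Set.mem_compl_iff, Set.mem_setOf_eq]
        omega
      rw [h0]; exact (hGt j).inter (hGt (j+1)).compl
  have hlint : ∫⁻ ω, ENNReal.ofReal ((T ω : ℝ)) ∂μ ≤ ENNReal.ofReal (B ^ 2 / V) := by
    calc ∫⁻ ω, ENNReal.ofReal ((T ω : ℝ)) ∂μ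
        = ∫⁻ ω, ∑' n : ℕ, Set.indicator {ω' | n < T ω'} (fun _ => (1 : ENNReal)) ω ∂μ := by
          refine lintegral_congr fun ω => ?_
          rw [ENNReal.ofReal_natCast, ← tsum_lt_nat (T ω)]
          refine tsum_congr fun n => ?_
          rw [Set.indicator_apply]
          simp only [Set.mem_setOf_eq]
      _ = ∑' n : ℕ, ∫⁻ ω, Set.indicator {ω' | n < T ω'} (fun _ => (1 : ENNReal)) ω ∂μ :=
          lintegral_tsum fun n => (measurable_const.indicator (hGt n)).aemeasurable
      _ = ∑' n : ℕ, μ {ω | n < T ω} := by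
          refine tsum_congr fun n => ?_
          rw [lintegral_indicator (hGt n)]
          simp
      _ ≤ ∑' n : ℕ, μ (E n) := ENNReal.tsum_le_tsum fun n => measure_mono (hTsub n)
      _ ≤ ENNReal.ofReal (B ^ 2 / V) := by
          rw [ENNReal.tsum_eq_iSup_sum]
          refine iSup_le fun s => ?_
          obtain ⟨N, hN⟩ := s.exists_nat_subset_range
          calc ∑ n ∈ s, μ (E n) ≤ ∑ n ∈ Finset.range N, μ (E n) :=
                Finset.sum_le_sum_of_subset hN
            _ = ENNReal.ofReal (∑ n ∈ Finset.range N, (μ (E n)).toReal) := by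
                rw [ENNReal.ofReal_sum_of_nonneg (fun _ _ => ENNReal.toReal_nonneg)]
                exact Finset.sum_congr rfl fun n _ =>
                  (ENNReal.ofReal_toReal (measure_ne_top μ _)).symm
            _ ≤ ENNReal.ofReal (B ^ 2 / V) := ENNReal.ofReal_le_ofReal (real_bound N)
  have hnn : 0 ≤ᵐ[μ] fun ω => (T ω : ℝ) :=
    Filter.Eventually.of_forall fun ω => Nat.cast_nonneg _
  rw [integral_eq_lintegral_of_nonneg_ae hnn
    (Measurable.aestronglyMeasurable (measurable_from_top.comp hTm))]
  refine le_trans (ENNReal.toReal_mono ENNReal.ofReal_ne_top hlint) ?_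
  rw [ENNReal.toReal_ofReal (by positivity)]
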